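/- Let a, b be positive integers with gcd(a,b) = 1 and both a, b odd or of opposite parity so that (a-1)(b-1)/2 is an integer (which holds automatically since a, b coprime implies not both even, and (a-1)(b-1) is always even when gcd(a,b)=1). Then exactly one of the two equations x*a + y*b = (a-1)(b-1)/2 and x*a + y*b + 1 = (a-1)(b-1)/2 has a solution in nonnegative integers x, y. -/

import Mathlib

private def MyRep (a b n : ℤ) : Prop := ∃ x y : ℤ, 0 ≤ x ∧ 0 ≤ y ∧ x * a + y * b = n

private lemma myrep_decomp (a b : ℤ) (hb : 0 < b) (hab : IsCoprime a b) (n : ℤ) :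
    ∃ x y : ℤ, 0 ≤ x ∧ x < b ∧ n = x * a + y * b := by
  obtain ⟨u, v, huv⟩ := hab
  refine ⟨(n*u) % b, n*v + (n*u)/b * a, Int.emod_nonneg _ (ne_of_gt hb),
    Int.emod_lt_of_pos _ hb, ?_⟩
  have e := Int.emod_add_mul_ediv (n*u) b
  linear_combination -(a * e) - n * huv

private lemma not_myrep_F (a b : ℤ) (ha : 2 ≤ a) (hb : 2 ≤ b) (hab : IsCoprime a b) :
    ¬ MyRep a b (a*b - a - b) := by
  rintro ⟨x, y, hx, hy, h⟩
  have hb1 : b ∣ (x+1) * a := ⟨a - (y+1), by linarith [h]⟩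
  have ha1 : a ∣ (y+1) * b := ⟨b - (x+1), by linarith [h]⟩
  have hbx : b ∣ (x+1) := hab.symm.dvd_of_dvd_mul_right hb1
  have hay : a ∣ (y+1) := hab.dvd_of_dvd_mul_right ha1
  have h1 : b ≤ x + 1 := Int.le_of_dvd (by linarith) hbx
  have h2 : a ≤ y + 1 := Int.le_of_dvd (by linarith) hay
  nlinarith

private lemma myrep_xor (a b : ℤ) (ha : 2 ≤ a) (hb : 2 ≤ b) (hab : IsCoprime a b) (n : ℤ) :
    Xor' (MyRep a b n) (MyRep a b (a*b - a - b - n)) := by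
  have hF := not_myrep_F a b ha hb hab
  have hor : MyRep a b n ∨ MyRep a b (a*b - a - b - n) := by
    obtain ⟨x, y, hx0, hxb, hn⟩ := myrep_decomp a b (by linarith) hab n
    rcases le_or_gt 0 y with hy | hy
    · exact Or.inl ⟨x, y, hx0, hy, hn.symm⟩
    · exact Or.inr ⟨b - 1 - x, -y - 1, by linarith, by linarith, by linarith [hn]⟩
  have hnand : ¬ (MyRep a b n ∧ MyRep a b (a*b - a - b - n)) := by
    rintro ⟨⟨x1, y1, hx1, hy1, h1⟩, ⟨x2, y2, hx2, hy2, h2⟩⟩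
    exact hF ⟨x1 + x2, y1 + y2, by linarith, by linarith, by linarith⟩
  rcases hor with h | h
  · exact Or.inl ⟨h, fun h' => hnand ⟨h, h'⟩⟩
  · exact Or.inr ⟨h, fun h' => hnand ⟨h', h⟩⟩

private lemma myrep_iff_nat (a b n : ℕ) : MyRep a b n ↔ ∃ x y : ℕ, x * a + y * b = n := by
  constructor
  · rintro ⟨x, y, hx, hy, h⟩
    refine ⟨x.toNat, y.toNat, ?_⟩
    have hx' := Int.toNat_of_nonneg hx
    have hy' := Int.toNat_of_nonneg hy
    have : (x.toNat : ℤ) * a + (y.toNat : ℤ) * b = n := by rw [hx', hy']; exact h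
    exact_mod_cast this
  · rintro ⟨x, y, h⟩
    exact ⟨x, y, by positivity, by positivity, by exact_mod_cast h⟩

theorem stmt_0 (a b : ℕ) (ha : 0 < a) (hb : 0 < b) (hab : Nat.gcd a b = 1) :
    Xor' (∃ x y : ℕ, x * a + y * b = (a - 1) * (b - 1) / 2)
         (∃ x y : ℕ, x * a + y * b + 1 = (a - 1) * (b - 1) / 2) := by
  rcases eq_or_lt_of_le (show 1 ≤ a from ha) with h1 | ha2
  · left
    constructor
    · exact ⟨0, 0, by simp [← h1]⟩
    · rintro ⟨x, y, h⟩; simp [← h1] at h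
  rcases eq_or_lt_of_le (show 1 ≤ b from hb) with h1 | hb2
  · left
    constructor
    · exact ⟨0, 0, by simp [← h1]⟩
    · rintro ⟨x, y, h⟩; simp [← h1] at h
  -- main case: a, b ≥ 2
  have hdvd : 2 ∣ (a - 1) * (b - 1) := by
    rcases Nat.even_or_odd a with hea | hoa
    · have hob : ¬ 2 ∣ b := by
        intro h2b
        have : 2 ∣ Nat.gcd a b := Nat.dvd_gcd hea.two_dvd h2b
        omega
      have h2 : 2 ∣ (b - 1) := by omega
      exact h2.mul_left _
    · have h2 : 2 ∣ (a - 1) := by obtain ⟨k, hk⟩ := hoa; omega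
      exact h2.mul_right _
  set N : ℕ := (a - 1) * (b - 1) / 2 with hN
  have h2N : 2 * N = (a - 1) * (b - 1) := Nat.mul_div_cancel' hdvd
  have hp : 0 < (a - 1) * (b - 1) := Nat.mul_pos (by omega) (by omega)
  have hN1 : 1 ≤ N := by
    rcases Nat.eq_zero_or_pos N with h0 | h
    · rw [h0] at h2N; linarith
    · exact h
  have ha1 : 1 ≤ a := ha
  have hb1 : 1 ≤ b := hb
  have hc : (2 * N : ℤ) = ((a:ℤ) - 1) * ((b:ℤ) - 1) := by
    zify [ha1, hb1] at h2N
    exact_mod_cast h2N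
  have hco : IsCoprime (a : ℤ) (b : ℤ) := by
    rw [Int.isCoprime_iff_gcd_eq_one, Int.gcd_natCast_natCast]; exact hab
  have hx := myrep_xor (a : ℤ) (b : ℤ) (by exact_mod_cast ha2) (by exact_mod_cast hb2) hco (N : ℤ)
  have hFN : (a : ℤ) * b - a - b - N = ((N - 1 : ℕ) : ℤ) := by
    rw [Nat.cast_sub hN1]
    push_cast
    linear_combination -hc
  rw [hFN, myrep_iff_nat, myrep_iff_nat] at hx
  have heq : (∃ x y : ℕ, x * a + y * b = N - 1) ↔ (∃ x y : ℕ, x * a + y * b + 1 = N) := by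
    constructor <;> rintro ⟨x, y, h⟩ <;> exact ⟨x, y, by omega⟩
  rwa [heq] at hx
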